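/- Let E be a separable real normed space with smooth (Gateaux-differentiable away from 0) norm, C ⊆ E convex compact with 0 ∈ C, f : C → C 1-Lipschitz, and y_λ the unique fixed point of x ↦ λ f(x) for λ ∈ (0,1). Then y_λ converges as λ → 1. -/

import Mathlib

open Set Filter Topology NormedSpace

/-- Norm-to-weak continuity of the duality map for a smooth norm: the map
`z ↦ ℓ z v` is continuous at every nonzero point. -/
theorem ell_tendsto_aux {E : Type*} [NormedAddCommGroup E] [NormedSpace ℝ E]
    (ℓ : E → (E →L[ℝ] ℝ))
    (hℓ : ∀ x : E, x ≠ 0 → ‖ℓ x‖ = 1 ∧ ℓ x x = ‖x‖)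
    (huniq : ∀ x : E, x ≠ 0 → ∀ g : E →L[ℝ] ℝ, ‖g‖ = 1 → g x = ‖x‖ → g = ℓ x)
    {x : E} (hx : x ≠ 0) (v : E) :
    Tendsto (fun z => ℓ z v) (𝓝 x) (𝓝 (ℓ x v)) := by
  set Φ : E → WeakDual ℝ E := fun z => StrongDual.toWeakDual (ℓ z) with hΦ
  have hK : IsCompact (WeakDual.toStrongDual ⁻¹' Metric.closedBall (0 : StrongDual ℝ E) 1) :=
    WeakDual.isCompact_closedBall (0 : StrongDual ℝ E) 1
  have hne : ∀ᶠ z in 𝓝 x, z ≠ 0 := eventually_ne_nhds hx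
  have hmem : ∀ᶠ z in 𝓝 x, Φ z ∈ (WeakDual.toStrongDual ⁻¹' Metric.closedBall (0 : StrongDual ℝ E) 1) := by
    filter_upwards [hne] with z hz
    simp only [Set.mem_preimage, Metric.mem_closedBall, dist_zero_right]
    have : WeakDual.toStrongDual (Φ z) = ℓ z := rfl
    rw [this, (hℓ z hz).1]
  -- the evaluation at x tends to ‖x‖
  have tx : Tendsto (fun z => ℓ z x) (𝓝 x) (𝓝 ‖x‖) := by
    have hb : ∀ᶠ z in 𝓝 x, ‖ℓ z x - ‖x‖‖ ≤ 2 * ‖z - x‖ := by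
      filter_upwards [hne] with z hz
      have h1 : ℓ z x - ‖x‖ = ℓ z (x - z) + (‖z‖ - ‖x‖) := by
        rw [map_sub, (hℓ z hz).2]; ring
      have h2 : |ℓ z (x - z)| ≤ ‖x - z‖ := by
        calc |ℓ z (x - z)| ≤ ‖ℓ z‖ * ‖x - z‖ := (ℓ z).le_opNorm _
          _ = ‖x - z‖ := by rw [(hℓ z hz).1, one_mul]
      have h3 : |‖z‖ - ‖x‖| ≤ ‖z - x‖ := abs_norm_sub_norm_le z x
      have : ‖x - z‖ = ‖z - x‖ := norm_sub_rev x z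
      calc ‖ℓ z x - ‖x‖‖ = |ℓ z (x - z) + (‖z‖ - ‖x‖)| := by rw [h1]; rfl
        _ ≤ |ℓ z (x - z)| + |‖z‖ - ‖x‖| := abs_add_le _ _
        _ ≤ 2 * ‖z - x‖ := by rw [this] at h2; linarith
    have hto : Tendsto (fun z : E => 2 * ‖z - x‖) (𝓝 x) (𝓝 0) := by
      have : Tendsto (fun z : E => z - x) (𝓝 x) (𝓝 0) :=
        tendsto_sub_nhds_zero_iff.2 tendsto_id
      simpa using (this.norm.const_mul 2)
    have := squeeze_zero_norm' hb hto
    have h' : Tendsto (fun z => (ℓ z x - ‖x‖) + ‖x‖) (𝓝 x) (𝓝 (0 + ‖x‖)) :=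
      this.add tendsto_const_nhds
    simpa using h'
  have hΦto : Tendsto Φ (𝓝 x) (𝓝 (Φ x)) := by
    apply hK.tendsto_nhds_of_unique_mapClusterPt hmem
    intro g hgK hg
    -- g x = ‖x‖
    have hgx : (g : WeakDual ℝ E) x = ‖x‖ := by
      have hcont : Continuous fun w : WeakDual ℝ E => w x := WeakDual.eval_continuous x
      have hcp : ClusterPt (g x) (map (fun z => ℓ z x) (𝓝 x)) := by
        have : MapClusterPt (g x) (𝓝 x) (fun z => (Φ z) x) :=
          hg.clusterPt.map hcont.continuousAt (le_refl _)
        exact this.clusterPt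
      have hle : map (fun z => ℓ z x) (𝓝 x) ≤ 𝓝 ‖x‖ := tx
      have : (𝓝 (g x) ⊓ 𝓝 ‖x‖).NeBot :=
        Filter.NeBot.mono hcp (inf_le_inf_left _ hle)
      exact eq_of_nhds_neBot this
    have hgball : ‖WeakDual.toStrongDual g‖ ≤ 1 := by
      have hg' : g ∈ WeakDual.toStrongDual ⁻¹' Metric.closedBall (0 : StrongDual ℝ E) 1 := hgK
      simpa [dist_zero_right] using hg'
    have hxpos : (0:ℝ) < ‖x‖ := norm_pos_iff.2 hx
    have hge : (1:ℝ) ≤ ‖WeakDual.toStrongDual g‖ := by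
      have : ‖x‖ = (WeakDual.toStrongDual g) x := hgx.symm
      have hb := (WeakDual.toStrongDual g).le_opNorm x
      rw [← this, Real.norm_eq_abs, abs_of_pos hxpos] at hb
      nlinarith
    have hnorm : ‖WeakDual.toStrongDual g‖ = 1 := le_antisymm hgball hge
    have := huniq x hx (WeakDual.toStrongDual g) hnorm hgx
    have hg' : WeakDual.toStrongDual g = WeakDual.toStrongDual (Φ x) := this
    exact WeakDual.toStrongDual.injective hg'
  have hev : Tendsto (fun w : WeakDual ℝ E => w v) (𝓝 (Φ x)) (𝓝 ((Φ x) v)) :=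
    (WeakDual.eval_continuous v).continuousAt
  exact hev.comp hΦto

theorem ylam_converges_smooth_norm
    {E : Type*} [NormedAddCommGroup E] [NormedSpace ℝ E]
    [TopologicalSpace.SeparableSpace E]
    (ℓ : E → (E →L[ℝ] ℝ))
    (hℓ : ∀ x : E, x ≠ 0 → ‖ℓ x‖ = 1 ∧ ℓ x x = ‖x‖)
    (huniq : ∀ x : E, x ≠ 0 → ∀ g : E →L[ℝ] ℝ, ‖g‖ = 1 → g x = ‖x‖ → g = ℓ x)
    (hgateaux : ∀ x : E, x ≠ 0 → ∀ v : E,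
      Tendsto (fun t : ℝ => (‖x + t • v‖ - ‖x‖) / t) (nhdsWithin 0 {(0:ℝ)}ᶜ)
        (nhds (ℓ x v)))
    (C : Set E) (hC : Convex ℝ C) (hCcpt : IsCompact C) (h0 : (0:E) ∈ C)
    (f : E → E) (hf : MapsTo f C C) (hlip : LipschitzOnWith 1 f C)
    (y : ℝ → E) (hy : ∀ l ∈ Ioo (0:ℝ) 1, y l ∈ C ∧ l • f (y l) = y l) :
    ∃ ybar : E, Tendsto y (nhdsWithin 1 (Ioo (0:ℝ) 1)) (nhds ybar) := by
  set L := nhdsWithin (1:ℝ) (Ioo 0 1) with hLdef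
  haveI hLne : L.NeBot := by
    rw [hLdef, ← mem_closure_iff_nhdsWithin_neBot, closure_Ioo (zero_ne_one)]
    exact ⟨zero_le_one, le_refl 1⟩
  have hmemL : ∀ᶠ l in L, l ∈ Ioo (0:ℝ) 1 := eventually_mem_nhdsWithin
  have hmemC : ∀ᶠ l in L, y l ∈ C := hmemL.mono fun l hl => (hy l hl).1
  -- bound on C
  obtain ⟨M, hM⟩ := hCcpt.isBounded.exists_norm_le
  -- cluster points are fixed points of f
  have hfix : ∀ u : E, MapClusterPt u L y → u ∈ C ∧ f u = u := by
    intro u hu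
    have huF : ClusterPt u (map y L) := hu.clusterPt
    have hFC : map y L ≤ 𝓟 C := le_principal_iff.2 (mem_map.2 hmemC)
    have huC : u ∈ C := by
      have : ClusterPt u (𝓟 C) := huF.mono hFC
      rw [← mem_closure_iff_clusterPt] at this
      rwa [hCcpt.isClosed.closure_eq] at this
    refine ⟨huC, ?_⟩
    -- ‖y l - f (y l)‖ → 0
    have h1 : Tendsto (fun l => ‖y l - f (y l)‖) L (𝓝 0) := by
      apply squeeze_zero' (g := fun l => (1 - l) * M)
        (Eventually.of_forall fun _ => norm_nonneg _)
      · filter_upwards [hmemL] with l hl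
        have hyl := hy l hl
        have : y l - f (y l) = (l - 1) • f (y l) := by
          nth_rewrite 1 [← hyl.2]; rw [sub_smul, one_smul]
        rw [this, norm_smul, Real.norm_eq_abs, abs_of_nonpos (by linarith [hl.2])]
        have hfC : f (y l) ∈ C := hf hyl.1
        have := hM _ hfC
        nlinarith [hl.2, norm_nonneg (f (y l))]
      · have : Tendsto (fun l : ℝ => (1 - l) * M) (𝓝 1) (𝓝 ((1 - 1) * M)) :=
          ((tendsto_const_nhds.sub tendsto_id).mul tendsto_const_nhds)
        simpa using this.mono_left nhdsWithin_le_nhds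
    -- transfer via continuity on C
    set φ : E → ℝ := fun z => ‖z - f z‖ with hφ
    have hφcont : Tendsto φ (𝓝[C] u) (𝓝 (φ u)) := by
      have hfc : ContinuousWithinAt f C u := hlip.continuousOn u huC
      exact (continuousWithinAt_id.sub hfc).norm
    have hG : (𝓝 u ⊓ map y L).NeBot := huF
    have hGle : 𝓝 u ⊓ map y L ≤ 𝓝[C] u := by
      rw [nhdsWithin]
      exact le_inf inf_le_left (le_trans inf_le_right hFC)
    have t1 : Tendsto φ (𝓝 u ⊓ map y L) (𝓝 (φ u)) := hφcont.mono_left hGle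
    have t2 : Tendsto φ (𝓝 u ⊓ map y L) (𝓝 0) := by
      have : Tendsto φ (map y L) (𝓝 0) := by
        rw [tendsto_map'_iff]; exact h1
      exact this.mono_left inf_le_right
    have : φ u = 0 := tendsto_nhds_unique t1 t2
    have : u - f u = 0 := by rwa [hφ, norm_eq_zero] at this
    exact (sub_eq_zero.1 this).symm
  -- the key inequality for fixed points
  have hineq : ∀ l ∈ Ioo (0:ℝ) 1, ∀ p ∈ C, f p = p → y l ≠ p →
      ℓ (y l - p) p ≤ -‖y l - p‖ := by
    intro l hl p hpC hpfix hne
    obtain ⟨hyC, hyfix⟩ := hy l hl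
    set x := y l - p with hxdef
    have hxne : x ≠ 0 := sub_ne_zero.2 hne
    have hcontr : ‖y l - l • p‖ ≤ l * ‖x‖ := by
      have h1 : y l - l • p = l • (f (y l) - f p) := by
        rw [hpfix, smul_sub]; nth_rewrite 1 [← hyfix]; rfl
      have h2 : ‖f (y l) - f p‖ ≤ ‖y l - p‖ := by
        have := hlip.dist_le_mul (y l) hyC p hpC
        simpa [dist_eq_norm] using this
      rw [h1, norm_smul, Real.norm_eq_abs, abs_of_pos hl.1]
      exact mul_le_mul_of_nonneg_left h2 hl.1.le
    have hsub : ℓ x ((1 - l) • p) ≤ ‖y l - l • p‖ - ‖x‖ := by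
      have hxx : ℓ x x = ‖x‖ := (hℓ x hxne).2
      have hsum : x + (1 - l) • p = y l - l • p := by
        rw [hxdef, sub_smul, one_smul]; abel
      have hle : ℓ x (x + (1 - l) • p) ≤ ‖y l - l • p‖ := by
        calc ℓ x (x + (1 - l) • p) ≤ |ℓ x (x + (1 - l) • p)| := le_abs_self _
          _ ≤ ‖ℓ x‖ * ‖x + (1 - l) • p‖ := (ℓ x).le_opNorm _
          _ = ‖y l - l • p‖ := by rw [(hℓ x hxne).1, one_mul, hsum]
      have : ℓ x (x + (1 - l) • p) = ‖x‖ + ℓ x ((1 - l) • p) := by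
        rw [map_add, hxx]
      linarith [hle, this ▸ hle]
    have hsmul : ℓ x ((1 - l) • p) = (1 - l) * ℓ x p := by
      rw [map_smul]; rfl
    have h1l : (0:ℝ) < 1 - l := by linarith [hl.2]
    rw [hsmul] at hsub
    have : (1 - l) * ℓ x p ≤ -(1 - l) * ‖x‖ := by nlinarith [hcontr, hsub]
    nlinarith [this, h1l]
  -- limit inequality for cluster points
  have hclineq : ∀ u v : E, MapClusterPt u L y → v ∈ C → f v = v → u ≠ v →
      ℓ (u - v) v ≤ -‖u - v‖ := by
    intro u v hu hvC hvfix hne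
    have huvne : u - v ≠ 0 := sub_ne_zero.2 hne
    set φ : E → ℝ := fun z => ℓ (z - v) v + ‖z - v‖ with hφ
    have hφcont : Tendsto φ (𝓝 u) (𝓝 (ℓ (u - v) v + ‖u - v‖)) := by
      have h1 : Tendsto (fun z : E => z - v) (𝓝 u) (𝓝 (u - v)) :=
        tendsto_id.sub tendsto_const_nhds
      have h2 : Tendsto (fun z : E => ℓ (z - v) v) (𝓝 u) (𝓝 (ℓ (u - v) v)) :=
        (ell_tendsto_aux ℓ hℓ huniq huvne v).comp h1
      exact h2.add h1.norm
    have hG : (𝓝 u ⊓ map y L).NeBot := hu.clusterPt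
    have hevF : ∀ᶠ z in map y L, z ≠ v → φ z ≤ 0 := by
      rw [eventually_map]
      filter_upwards [hmemL] with l hl hne'
      have := hineq l hl v hvC hvfix hne'
      simp only [hφ]
      linarith
    have hevG : ∀ᶠ z in 𝓝 u ⊓ map y L, φ z ≤ 0 := by
      have h1 : ∀ᶠ z in 𝓝 u ⊓ map y L, z ≠ v :=
        (eventually_ne_nhds hne).filter_mono inf_le_left
      have h2 : ∀ᶠ z in 𝓝 u ⊓ map y L, z ≠ v → φ z ≤ 0 :=
        hevF.filter_mono inf_le_right
      filter_upwards [h1, h2] with z hz1 hz2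
      exact hz2 hz1
    have := le_of_tendsto (hφcont.mono_left inf_le_left) hevG
    linarith
  -- assemble
  have hFC : map y L ≤ 𝓟 C := le_principal_iff.2 (mem_map.2 hmemC)
  obtain ⟨u, huC, hu⟩ := hCcpt.exists_mapClusterPt hFC
  refine ⟨u, hCcpt.tendsto_nhds_of_unique_mapClusterPt hmemC ?_⟩
  intro v hvC hv
  by_contra hne
  have hufix := (hfix u hu).2
  have hvfix := (hfix v hv).2
  have h1 : ℓ (v - u) u ≤ -‖v - u‖ := hclineq v u hv huC hufix hne
  have h2 : ℓ (u - v) v ≤ -‖u - v‖ := hclineq u v hu hvC hvfix (Ne.symm hne)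
  have huvne : u - v ≠ 0 := sub_ne_zero.2 (Ne.symm hne)
  have hvune : v - u ≠ 0 := sub_ne_zero.2 hne
  have hneg : ℓ (v - u) = -ℓ (u - v) := by
    refine (huniq (v - u) hvune (-ℓ (u - v)) ?_ ?_).symm
    · rw [norm_neg, (hℓ _ huvne).1]
    · have := (hℓ _ huvne).2
      have hrw : (-ℓ (u - v)) (v - u) = ℓ (u - v) (u - v) := by
        simp [neg_sub]
      rw [hrw, this, norm_sub_rev]
  rw [hneg] at h1
  have h1' : -ℓ (u - v) u ≤ -‖v - u‖ := h1
  have hval : ℓ (u - v) (u - v) = ‖u - v‖ := (hℓ _ huvne).2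
  have hms : ℓ (u - v) u - ℓ (u - v) v = ‖u - v‖ := by
    rw [← map_sub, hval]
  have hrev : ‖v - u‖ = ‖u - v‖ := norm_sub_rev v u
  have hpos : 0 < ‖u - v‖ := norm_pos_iff.2 huvne
  rw [hrev] at h1'
  linarith
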